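/- Let H and G be finitely generated groups with word metrics, and (X,d) a metric space. If H acts translation-like on G and G acts translation-like on X, then H acts translation-like on X (via composing the orbit identification: picking orbit representatives of the G-action and letting H act through its action on G inside each orbit). -/
import Mathlib


/-- A translation-like (right) action of a group `K` on a metric space `X`:
a free action in which every group element moves points a uniformly bounded
distance. -/
def RightTranslationLike {K X : Type*} [Group K] [MetricSpace X]
    (α : K → X → X) : Prop :=
  (∀ x, α 1 x = x) ∧ (∀ k₁ k₂ x, α (k₁ * k₂) x = α k₂ (α k₁ x)) ∧
  (∀ k x, α k x = x → k = 1) ∧ ∀ k, ∃ C : ℝ, ∀ x, dist x (α k x) ≤ C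

/-- If `H` acts translation-like on the finitely generated group
`G` (with a word metric: left-invariant with finite balls) and `G` acts
translation-like on a metric space `X`, then `H` acts translation-like on `X`. -/
theorem translation_like_transitive
    {H G X : Type*} [Group H] [Group G] [MetricSpace G] [MetricSpace X]
    (hinvG : ∀ a b c : G, dist (a * b) (a * c) = dist b c)
    (hfinG : ∀ R : ℝ, {g : G | dist 1 g ≤ R}.Finite)
    (α : H → G → G) (hα : RightTranslationLike α)
    (β : G → X → X) (hβ : RightTranslationLike β) :
    ∃ γ : H → X → X, RightTranslationLike γ := by
  classical
  obtain ⟨hβ1, hβm, hβf, hβb⟩ := hβ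
  obtain ⟨hα1, hαm, hαf, hαb⟩ := hα
  have hinv : ∀ (g : G) (x : X), β g⁻¹ (β g x) = x := fun g x => by
    have h := hβm g g⁻¹ x
    rw [mul_inv_cancel, hβ1] at h
    exact h.symm
  have huniq : ∀ (g g' : G) (x : X), β g x = β g' x → g = g' := by
    intro g g' x h
    have h2 : β (g * g'⁻¹) x = x := by rw [hβm, h, hinv]
    exact mul_inv_eq_one.mp (hβf _ _ h2)
  let rel : X → X → Prop := fun x y => ∃ g, β g x = y
  have hrel : Equivalence rel := by
    constructor
    · exact fun x => ⟨1, hβ1 x⟩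
    · rintro x y ⟨g, hg⟩
      exact ⟨g⁻¹, by rw [← hg, hinv]⟩
    · rintro x y z ⟨g, hg⟩ ⟨g', hg'⟩
      exact ⟨g * g', by rw [hβm, hg, hg']⟩
  let sd : Setoid X := ⟨rel, hrel⟩
  let r : X → X := fun x => (Quotient.mk sd x).out
  have hmk : ∀ (g : G) (x : X), Quotient.mk sd (β g x) = Quotient.mk sd x :=
    fun g x => (Quotient.sound (show rel x (β g x) from ⟨g, rfl⟩)).symm
  have hrβ : ∀ (g : G) (x : X), r (β g x) = r x :=
    fun g x => congrArg Quotient.out (hmk g x)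
  have hr : ∀ x, ∃ g, β g (r x) = x := fun x => Quotient.mk_out x
  let ρ : X → G := fun x => Classical.choose (hr x)
  have hρ : ∀ x, β (ρ x) (r x) = x := fun x => Classical.choose_spec (hr x)
  have hrr : ∀ x, r (r x) = r x := by
    intro x
    obtain ⟨g, hg⟩ := hr x
    calc r (r x) = r (β g (r x)) := (hrβ g (r x)).symm
    _ = r x := by rw [hg]
  have hρβ : ∀ (g : G) (x : X), ρ (β g (r x)) = g := by
    intro g x
    apply huniq _ _ (r x)
    have h := hρ (β g (r x))
    rw [hrβ, hrr] at h
    exact h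
  refine ⟨fun h x => β (α h (ρ x)) (r x), ?_, ?_, ?_, ?_⟩
  · intro x
    show β (α 1 (ρ x)) (r x) = x
    rw [hα1]; exact hρ x
  · intro h₁ h₂ x
    show β (α (h₁ * h₂) (ρ x)) (r x)
        = β (α h₂ (ρ (β (α h₁ (ρ x)) (r x)))) (r (β (α h₁ (ρ x)) (r x)))
    rw [hρβ, hrβ, hrr, hαm]
  · intro h x hx
    replace hx : β (α h (ρ x)) (r x) = x := hx
    have h2 : β (α h (ρ x)) (r x) = β (ρ x) (r x) := by
      rw [hρ x]; exact hx
    exact hαf h (ρ x) (huniq _ _ _ h2)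
  · intro h
    obtain ⟨C, hC⟩ := hαb h
    have hC0 : (0 : ℝ) ≤ C := le_trans dist_nonneg (hC 1)
    have h1S : (1:G) ∈ {g : G | dist 1 g ≤ C} := by
      simpa using hC0
    let S := (hfinG C).toFinset
    have hne : S.Nonempty := ⟨1, (hfinG C).mem_toFinset.mpr h1S⟩
    let Db : G → ℝ := fun s => Classical.choose (hβb s)
    have hDb : ∀ s x, dist x (β s x) ≤ Db s := fun s => Classical.choose_spec (hβb s)
    refine ⟨S.sup' hne Db, ?_⟩
    intro x
    set g := ρ x with hg
    set s0 := g⁻¹ * α h g with hs0def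
    have hs0 : s0 ∈ S := by
      rw [(hfinG C).mem_toFinset]
      have he : dist (1:G) s0 = dist g (α h g) := by
        have h3 := hinvG g 1 s0
        rw [mul_one, hs0def, mul_inv_cancel_left] at h3
        exact h3.symm
      simpa [Set.mem_setOf_eq, he] using hC g
    have key : β (α h g) (r x) = β s0 x := by
      have h4 : α h g = g * s0 := by rw [hs0def, mul_inv_cancel_left]
      rw [h4, hβm, hρ]
    show dist x (β (α h g) (r x)) ≤ S.sup' hne Db
    calc dist x (β (α h g) (r x)) = dist x (β s0 x) := by rw [key]
    _ ≤ Db s0 := hDb s0 x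
    _ ≤ S.sup' hne Db := Finset.le_sup' Db hs0
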